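/- Let V be a subspace of a real inner product space M with r-fold vector cross product form φ of degree r+1 such that φ|_C = 0 on a subspace C. Then dim C ≤ (dim M + r - 1)/2. (Linear version: if φ restricted to C vanishes, then for any (r-1)-dimensional subspace W ⊆ C spanned by orthonormal vectors e₁,...,e_{r-1}, the 2-form ι_{e₁∧...∧e_{r-1}}φ is a nondegenerate 2-form on W^⊥ and C ∩ W^⊥ is isotropic for it.) -/

import Mathlib

open scoped RealInnerProductSpace

/-- Dimension bound for branes: if `M` is a finite-dimensional real inner product space
with an `r`-fold vector cross product `χ` (with associated `(r+1)`-form `φ`), and `C` is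
a subspace on which `φ` vanishes identically, then `dim C ≤ (dim M + r - 1)/2`, i.e.
`2 · dim C ≤ dim M + r - 1`. -/
theorem brane_dimension_bound
    {M : Type*} [NormedAddCommGroup M] [InnerProductSpace ℝ M]
    [FiniteDimensional ℝ M] (r : ℕ) (hr : 1 ≤ r)
    (χ : AlternatingMap ℝ M M (Fin r))
    (hperp : ∀ (v : Fin r → M) (i : Fin r), ⟪χ v, v i⟫ = 0)
    (hnorm : ∀ v : Fin r → M,
      ⟪χ v, χ v⟫ = Matrix.det (Matrix.of fun i j => ⟪v i, v j⟫))
    (C : Submodule ℝ M)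
    (hvan : ∀ v : Fin (r+1) → M, (∀ i, v i ∈ C) →
      ⟪χ (fun k => v k.castSucc), v (Fin.last r)⟫ = 0) :
    2 * Module.finrank ℝ C ≤ Module.finrank ℝ M + r - 1 := by
  obtain ⟨m, rfl⟩ : ∃ m, r = m + 1 := ⟨r - 1, by omega⟩
  by_cases hc : Module.finrank ℝ C ≤ m
  · have := Submodule.finrank_le C
    omega
  push_neg at hc
  have hcm : m ≤ Module.finrank ℝ C := le_of_lt hc
  -- orthonormal family of m vectors in C
  set b := stdOrthonormalBasis ℝ C with hb
  set e : Fin m → M := fun i => (b (Fin.castLE hcm i) : M) with he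
  have heC : ∀ i, e i ∈ C := fun i => (b (Fin.castLE hcm i)).2
  have honb := b.orthonormal
  rw [orthonormal_iff_ite] at honb
  have hone : ∀ i j, ⟪e i, e j⟫ = if i = j then (1:ℝ) else 0 := by
    intro i j
    have := honb (Fin.castLE hcm i) (Fin.castLE hcm j)
    simpa [he, Submodule.coe_inner, Fin.castLE_inj] using this
  set W : Submodule ℝ M := Submodule.span ℝ (Set.range e) with hW
  set N : Submodule ℝ M := Wᗮ with hN
  have heW : ∀ i, e i ∈ W := fun i => Submodule.subset_span ⟨i, rfl⟩
  have mem_N : ∀ x : M, (∀ i, ⟪e i, x⟫ = 0) → x ∈ N := by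
    intro x hx
    rw [hN, Submodule.mem_orthogonal]
    intro u hu
    induction hu using Submodule.span_induction with
    | mem u hu => obtain ⟨i, rfl⟩ := hu; exact hx i
    | zero => simp
    | add u v _ _ hu hv => rw [inner_add_left, hu, hv]; ring
    | smul c u _ hu => rw [real_inner_smul_left, hu]; ring
  have heN : ∀ x ∈ N, ∀ i, ⟪e i, x⟫ = 0 := by
    intro x hx i
    exact Submodule.inner_right_of_mem_orthogonal (heW i) hx
  -- the linear map J
  set J : M →ₗ[ℝ] M := χ.toMultilinearMap.curryRight e with hJ
  have hJapp : ∀ u, J u = χ (Fin.snoc e u) := fun u => rfl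
  -- J u is orthogonal to all e i
  have hJN : ∀ u : M, J u ∈ N := by
    intro u
    apply mem_N
    intro i
    have := hperp (Fin.snoc e u) i.castSucc
    rw [Fin.snoc_castSucc] at this
    rw [hJapp, real_inner_comm]
    exact this
  -- norm identity on N
  have hJnorm : ∀ u ∈ N, ⟪J u, J u⟫ = ⟪u, u⟫ := by
    intro u hu
    set w : Fin (m+1) → M := Fin.snoc e u with hw
    have hdet := hnorm w
    have hmat : (Matrix.of fun i j => ⟪w i, w j⟫) =
        Matrix.diagonal (fun i : Fin (m+1) => if i = Fin.last m then ⟪u, u⟫ else (1:ℝ)) := by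
      ext i j
      by_cases hi : i = Fin.last m <;> by_cases hj : j = Fin.last m
      · subst hi; subst hj
        simp [Matrix.diagonal, hw]
      · obtain ⟨j', rfl⟩ := Fin.exists_castSucc_eq.mpr hj
        subst hi
        simp only [hw, Matrix.of_apply, Fin.snoc_last, Fin.snoc_castSucc]
        rw [real_inner_comm, heN u hu j']
        simp [Matrix.diagonal, (Fin.castSucc_lt_last j').ne, (Fin.castSucc_lt_last j').ne']
      · obtain ⟨i', rfl⟩ := Fin.exists_castSucc_eq.mpr hi
        subst hj
        simp only [hw, Matrix.of_apply, Fin.snoc_last, Fin.snoc_castSucc]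
        rw [heN u hu i']
        simp [Matrix.diagonal, (Fin.castSucc_lt_last i').ne, (Fin.castSucc_lt_last i').ne']
      · obtain ⟨i', rfl⟩ := Fin.exists_castSucc_eq.mpr hi
        obtain ⟨j', rfl⟩ := Fin.exists_castSucc_eq.mpr hj
        simp only [hw, Matrix.of_apply, Fin.snoc_castSucc]
        rw [hone i' j']
        simp [Matrix.diagonal, Fin.castSucc_inj, (Fin.castSucc_lt_last i').ne]
    rw [hJapp, ← hw, hdet, hmat, Matrix.det_diagonal]
    simp
  set C' : Submodule ℝ M := C ⊓ N with hC'
  set D : Submodule ℝ M := N ⊓ C'ᗮ with hD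
  -- J maps C' into D
  have hJCD : ∀ u ∈ C', J u ∈ D := by
    intro u hu
    refine Submodule.mem_inf.mpr ⟨hJN u, Submodule.mem_orthogonal _ _ |>.mpr ?_⟩
    intro v hv
    obtain ⟨hvC, hvN⟩ := hv
    obtain ⟨huC, huN⟩ := hu
    set w : Fin (m+1) → M := Fin.snoc e u with hw
    set w2 : Fin (m+2) → M := Fin.snoc w v with hw2
    have key := hvan w2 ?_
    · have h1 : (fun k : Fin (m+1) => w2 k.castSucc) = w := by
        funext k; simp [hw2]
      rw [h1] at key
      simp only [hw2, Fin.snoc_last] at key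
      rw [hJapp, real_inner_comm, ← hw]
      exact key
    · intro i
      by_cases hi : i = Fin.last (m+1)
      · subst hi; simp only [hw2, Fin.snoc_last]; exact hvC
      · obtain ⟨i', rfl⟩ := Fin.exists_castSucc_eq.mpr hi
        simp only [hw2, Fin.snoc_castSucc]
        by_cases hi' : i' = Fin.last m
        · subst hi'; simp only [hw, Fin.snoc_last]; exact huC
        · obtain ⟨i'', rfl⟩ := Fin.exists_castSucc_eq.mpr hi'
          simp only [hw, Fin.snoc_castSucc]; exact heC i''
  -- restricted map and injectivity
  set g : C' →ₗ[ℝ] D := J.restrict hJCD with hg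
  have hginj : Function.Injective g := by
    rw [← LinearMap.ker_eq_bot]
    rw [Submodule.eq_bot_iff]
    rintro ⟨x, hx⟩ hker
    have hJx : J x = 0 := by
      have : (g ⟨x, hx⟩ : M) = 0 := by rw [hker]; rfl
      simpa [hg, LinearMap.restrict_apply] using this
    have : ⟪x, x⟫ = 0 := by
      rw [← hJnorm x hx.2, hJx, inner_zero_left]
    have hx0 : x = 0 := by rwa [inner_self_eq_zero] at this
    simp [hx0]
  have hC'D : Module.finrank ℝ C' ≤ Module.finrank ℝ D :=
    LinearMap.finrank_le_finrank_of_injective hginj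
  -- C' and D are disjoint, both inside N
  have hdisj : C' ⊓ D = ⊥ := by
    rw [Submodule.eq_bot_iff]
    rintro x ⟨hx1, _, hx3⟩
    have : ⟪x, x⟫ = 0 := Submodule.inner_right_of_mem_orthogonal hx1 hx3
    rwa [inner_self_eq_zero] at this
  have hsum : Module.finrank ℝ C' + Module.finrank ℝ D ≤ Module.finrank ℝ N := by
    have h1 := Submodule.finrank_sup_add_finrank_inf_eq C' D
    rw [hdisj] at h1
    simp only [finrank_bot, add_zero] at h1
    rw [← h1]
    exact Submodule.finrank_mono (sup_le inf_le_right inf_le_left)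
  -- dimension counts
  have hWm : Module.finrank ℝ W = m := by
    have hli : LinearIndependent ℝ e :=
      (orthonormal_iff_ite.mpr hone).linearIndependent
    rw [hW, finrank_span_eq_card hli, Fintype.card_fin]
  have hWN : Module.finrank ℝ W + Module.finrank ℝ N = Module.finrank ℝ M :=
    Submodule.finrank_add_finrank_orthogonal W
  have hCN : Module.finrank ℝ C + Module.finrank ℝ N
      ≤ Module.finrank ℝ M + Module.finrank ℝ C' := by
    have h1 := Submodule.finrank_sup_add_finrank_inf_eq C N
    have h2 : Module.finrank ℝ ↥(C ⊔ N) ≤ Module.finrank ℝ M :=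
      Submodule.finrank_le _
    rw [← hC'] at h1
    omega
  omega
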